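/- Let H be an equationally noetherian group and G a finitely generated H-limit group. Then for every finite subset X ⊆ G \ {1} and every ordinal γ with 1 ≤ γ ≤ Rk(G), there exists a surjective homomorphism f : G → L onto an H-limit group L with Rk(L) = γ and 1 ∉ f(X). -/

import Mathlib

open FirstOrder FirstOrder.Language Cardinal

namespace Paper

variable (L : FirstOrder.Language.{0, 0})

/-- A tuple `a` generates `M`: every element is the value of a term at `a`. -/
def Generates {M : Type*} [L.Structure M] {n : ℕ} (a : Fin n → M) : Prop :=
  ∀ y : M, ∃ t : L.Term (Fin n), t.realize a = y

/-- A type over the language `L(c₁,…,cₙ)` in `k` free variables, represented as a set of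
`L`-formulas in variables `Fin n ⊕ Fin k` (the first block playing the role of the constants). -/
def NType (n : ℕ) : Type := Σ k : ℕ, Set (L.Formula (Fin n ⊕ Fin k))

variable {L}

/-- The pair `(M, a)` realizes the type `p` (in the language with the constants interpreted
as `a`). -/
def RealizesNType {M : Type*} [L.Structure M] {n : ℕ} (a : Fin n → M) (p : NType L n) : Prop :=
  ∃ v : Fin p.1 → M, ∀ φ ∈ p.2, φ.Realize (Sum.elim a v)

variable (L) in
/-- The type `pₙ(y) = { y ≠ τ(c̄) | τ an L-term }`. -/
def pType (n : ℕ) : NType L n :=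
  ⟨1, { φ | ∃ t : L.Term (Fin n),
    φ = (Term.equal (t.relabel Sum.inl) (Term.var (Sum.inr 0))).not }⟩

/-- The complete type `p_ā(M)` of a tuple, viewed as a set of sentences of `L(c̄)`. -/
def ctype {M : Type*} [L.Structure M] {n : ℕ} (a : Fin n → M) : NType L n :=
  ⟨0, { φ | ∃ ψ : L.Formula (Fin n), ψ.Realize a ∧ φ = ψ.relabel Sum.inl }⟩

/-- A type (in the language with constants) is supported over a class `K` of models-with-tuples
if some formula, satisfiable in `K`, forces realization of the type throughout `K`. -/
def Supported {T : L.Theory} {n : ℕ} (K : Set (Σ M : Theory.ModelType.{0, 0, 0} T, Fin n → M))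
    (p : NType L n) : Prop :=
  ∃ φ : L.Formula (Fin n ⊕ Fin p.1),
    (∃ P ∈ K, ∃ v : Fin p.1 → P.1, φ.Realize (Sum.elim P.2 v)) ∧
    ∀ P ∈ K, ∀ v : Fin p.1 → P.1, φ.Realize (Sum.elim P.2 v) →
      ∀ ψ ∈ p.2, ψ.Realize (Sum.elim P.2 v)

/-- `rk`: `RankEq T n α M` means the `n`-rank of `M` is `α`. Defined by transfinite
recursion: the rank is `α ≥ 1` iff for every generating `n`-tuple `ā`, `p_ā(M)` is
supported over the class of models (with generating tuple) of `T` omitting `pₙ` and the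
complete types of all models of smaller rank. -/
def RankEq (T : L.Theory) (n : ℕ) : Ordinal.{0} → Theory.ModelType.{0, 0, 0} T → Prop :=
  Ordinal.lt_wf.fix fun α ih M =>
    1 ≤ α ∧ (∃ a : Fin n → M, Generates L a) ∧
      ∀ a : Fin n → M, Generates L a →
        Supported
          { P : Σ N : T.ModelType, Fin n → N |
            ¬ RealizesNType (L := L) P.2 (pType L n) ∧
            ∀ β : Ordinal, (h : β < α) → ∀ N : T.ModelType, ih β h N →
              ∀ b : Fin n → N, Generates L b → ¬ RealizesNType (L := L) P.2 (ctype (L := L) b) }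
          (ctype a)

/-- The class `K(T|P_{n,α})`: models of `T` with a distinguished `n`-tuple, omitting `pₙ`
(equivalently, generated by the tuple) and omitting the complete type of every `n`-generated
model of `T` of rank `< α`. -/
def Kclass (T : L.Theory) (n : ℕ) (α : Ordinal.{0}) :
    Set (Σ M : Theory.ModelType.{0, 0, 0} T, Fin n → M) :=
  { P | ¬ RealizesNType (L := L) P.2 (pType L n) ∧
    ∀ β : Ordinal, β < α → ∀ N : T.ModelType, RankEq T n β N →
      ∀ b : Fin n → N, Generates L b → ¬ RealizesNType (L := L) P.2 (ctype (L := L) b) }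

variable (L) in
/-- `n`-generated models of `T` (with countable carrier). -/
abbrev NGenModel (T : L.Theory) (n : ℕ) : Type 1 :=
  { M : Theory.ModelType.{0, 0, 0} T // ∃ a : Fin n → M, Generates L a }

instance isoSetoid {T : L.Theory} {n : ℕ} : Setoid (NGenModel L T n) where
  r M N := Nonempty (M.1 ≃[L] N.1)
  iseqv := ⟨fun M => ⟨FirstOrder.Language.Equiv.refl L M.1⟩, fun ⟨e⟩ => ⟨e.symm⟩, fun ⟨e⟩ ⟨f⟩ => ⟨FirstOrder.Language.Equiv.comp f e⟩⟩

variable (L) in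
/-- `α_n(T)`: the number of isomorphism classes of `n`-generated models of `T`. -/
def alphaCard (T : L.Theory) (n : ℕ) : Cardinal.{1} :=
  Cardinal.mk (Quotient (isoSetoid (L := L) (T := T) (n := n)))

variable (L) in
/-- `T` is `n`-consistent: it has an `n`-generated model. -/
def NConsistent (T : L.Theory) (n : ℕ) : Prop :=
  ∃ M : Theory.ModelType.{0, 0, 0} T, ∃ a : Fin n → M, Generates L a


/-! ### Universal / existential formulas, ∀∃ theories -/

variable (L) in
/-- A universal formula: universal quantifiers over a quantifier-free formula. -/
def IsUniversalFormula {α : Type} (φ : L.Formula α) : Prop :=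
  ∃ (k : ℕ) (ψ : L.BoundedFormula α k), ψ.IsQF ∧ φ = ψ.alls

variable (L) in
/-- An existential formula: existential quantifiers over a quantifier-free formula. -/
def IsExistentialFormula {α : Type} (φ : L.Formula α) : Prop :=
  ∃ (k : ℕ) (ψ : L.BoundedFormula α k), ψ.IsQF ∧ φ = ψ.exs

/-- Iterated existential quantification of the last `k` bounded variables. -/
def exsTo {α : Type} : ∀ {m k : ℕ}, L.BoundedFormula α (m + k) → L.BoundedFormula α m
  | _, 0, φ => φ
  | _, _ + 1, φ => exsTo φ.ex

variable (L) in
/-- A `∀∃`-sentence: `∀ x̄ ∃ ȳ ψ` with `ψ` quantifier-free. -/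
def IsAESentence (σ : L.Sentence) : Prop :=
  ∃ (m k : ℕ) (ψ : L.BoundedFormula Empty (m + k)), ψ.IsQF ∧ σ = (exsTo ψ).alls

variable (L) in
/-- A `∀∃`-theory. -/
def IsAETheory (T : L.Theory) : Prop := ∀ σ ∈ T, IsAESentence L σ

/-- The universal type `p_{ā,∀}(M)` of a tuple: universal sentences of `L(c̄)` true of `ā`. -/
def utype {M : Type*} [L.Structure M] {n : ℕ} (a : Fin n → M) : NType L n :=
  ⟨0, { φ | ∃ ψ : L.Formula (Fin n),
    IsUniversalFormula L ψ ∧ ψ.Realize a ∧ φ = ψ.relabel Sum.inl }⟩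

/-- A universal type is existentially supported over a class `K` if some existential formula,
satisfiable in `K`, forces its realization throughout `K`. -/
def ESupported {T : L.Theory} {n : ℕ} (K : Set (Σ M : Theory.ModelType.{0, 0, 0} T, Fin n → M))
    (p : NType L n) : Prop :=
  ∃ φ : L.Formula (Fin n ⊕ Fin p.1), IsExistentialFormula L φ ∧
    (∃ P ∈ K, ∃ v : Fin p.1 → P.1, φ.Realize (Sum.elim P.2 v)) ∧
    ∀ P ∈ K, ∀ v : Fin p.1 → P.1, φ.Realize (Sum.elim P.2 v) →
      ∀ ψ ∈ p.2, ψ.Realize (Sum.elim P.2 v)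

/-- `Rk`: the rank defined from universal types and existential supports. -/
def URankEq (T : L.Theory) (n : ℕ) : Ordinal.{0} → Theory.ModelType.{0, 0, 0} T → Prop :=
  Ordinal.lt_wf.fix fun α ih M =>
    1 ≤ α ∧ (∃ a : Fin n → M, Generates L a) ∧
      ∀ a : Fin n → M, Generates L a →
        ESupported
          { P : Σ N : Theory.ModelType.{0, 0, 0} T, Fin n → N |
            ¬ RealizesNType (L := L) P.2 (pType L n) ∧
            ∀ β : Ordinal, (h : β < α) → ∀ N : Theory.ModelType.{0, 0, 0} T, ih β h N →
              ∀ b : Fin n → N, Generates L b → ¬ RealizesNType (L := L) P.2 (utype b) }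
          (utype a)

/-- The class `K(T|Q_{n,α})` of the universal rank. -/
def UKclass (T : L.Theory) (n : ℕ) (α : Ordinal.{0}) :
    Set (Σ M : Theory.ModelType.{0, 0, 0} T, Fin n → M) :=
  { P | ¬ RealizesNType (L := L) P.2 (pType L n) ∧
    ∀ β : Ordinal, β < α → ∀ N : Theory.ModelType.{0, 0, 0} T, URankEq T n β N →
      ∀ b : Fin n → N, Generates L b → ¬ RealizesNType (L := L) P.2 (utype b) }

/-! ### Types in finitely many variables, classes of models, omitting types -/

variable (L) in
/-- A type in finitely many variables. -/
def MType : Type := Σ k : ℕ, Set (L.Formula (Fin k))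

variable (L) in
/-- A type all of whose formulas are universal. -/
def IsUniversalMType (p : MType L) : Prop := ∀ φ ∈ p.2, IsUniversalFormula L φ

/-- A model realizes a type if some tuple satisfies all of its formulas. -/
def MRealizes {T : L.Theory} (M : Theory.ModelType.{0, 0, 0} T) (p : MType L) : Prop :=
  ∃ v : Fin p.1 → M, ∀ φ ∈ p.2, φ.Realize v

/-- The class `K(T|P)` of models of `T` omitting every type in `P`. -/
def KTP (T : L.Theory) (P : Set (MType L)) : Set (Theory.ModelType.{0, 0, 0} T) :=
  { M | ∀ p ∈ P, ¬ MRealizes M p }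

/-- A type is supported over a class `K` of models of `T`. -/
def MSupported {T : L.Theory} (K : Set (Theory.ModelType.{0, 0, 0} T)) (q : MType L) : Prop :=
  ∃ φ : L.Formula (Fin q.1),
    (∃ M ∈ K, ∃ v : Fin q.1 → M, φ.Realize v) ∧
    ∀ M ∈ K, ∀ v : Fin q.1 → M, φ.Realize v → ∀ ψ ∈ q.2, ψ.Realize v

/-- A universal type is existentially supported over a class `K` of models of `T`. -/
def MESupported {T : L.Theory} (K : Set (Theory.ModelType.{0, 0, 0} T)) (q : MType L) : Prop :=
  ∃ φ : L.Formula (Fin q.1), IsExistentialFormula L φ ∧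
    (∃ M ∈ K, ∃ v : Fin q.1 → M, φ.Realize v) ∧
    ∀ M ∈ K, ∀ v : Fin q.1 → M, φ.Realize v → ∀ ψ ∈ q.2, ψ.Realize v


/-! ### Groups -/

/-- The function symbols of the language of groups. -/
inductive GroupFunc : ℕ → Type
  | mul : GroupFunc 2
  | inv : GroupFunc 1
  | one : GroupFunc 0

/-- The first-order language of groups. -/
def grpLang : FirstOrder.Language.{0, 0} := ⟨GroupFunc, fun _ => Empty⟩

/-- Any group is a `grpLang`-structure. -/
instance grpStructure (G : Type*) [Group G] : grpLang.Structure G where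
  funMap {n} f v :=
    match f with
    | .mul => v 0 * v 1
    | .inv => (v 0)⁻¹
    | .one => 1
  RelMap {n} r := r.elim

/-- The universal theory `Th_∀(H)` of a group `H`. -/
def uTheoryOf (H : Type*) [Group H] : grpLang.Theory :=
  { σ | IsUniversalFormula grpLang σ ∧ H ⊨ σ }

/-- The algebraic set `V(S)` defined by a set `S ⊆ H ∗ F(x₁,…,xₙ)` of equations. -/
def Vset {H : Type} [Group H] {n : ℕ} (S : Set (Monoid.Coprod H (FreeGroup (Fin n)))) :
    Set (Fin n → H) :=
  { g | ∀ s ∈ S, Monoid.Coprod.lift (MonoidHom.id H) (FreeGroup.lift g) s = 1 }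

/-- A group `H` is equationally noetherian if every algebraic set over `H` is defined by a
finite subsystem. -/
def EquationallyNoetherian (H : Type) [Group H] : Prop :=
  ∀ (n : ℕ) (S : Set (Monoid.Coprod H (FreeGroup (Fin n)))),
    ∃ S₀ ⊆ S, S₀.Finite ∧ Vset S = Vset S₀

/-- Bundled finitely generated `H`-limit groups (with countable-universe carrier):
finitely generated groups satisfying the universal theory of `H`. -/
def LimitGroup (H : Type) [Group H] : Type 1 :=
  { G : GrpCat.{0} // Group.FG G ∧ (G : Type) ⊨ uTheoryOf H }

instance limitGroupSetoid {H : Type} [Group H] : Setoid (LimitGroup H) where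
  r A B := Nonempty ((A.1 : Type) ≃* (B.1 : Type))
  iseqv := ⟨fun A => ⟨MulEquiv.refl _⟩, fun ⟨e⟩ => ⟨e.symm⟩, fun ⟨e⟩ ⟨f⟩ => ⟨e.trans f⟩⟩

/-- `GRank H G γ` : the group `G`, as a model of `Th_∀(H)`, has universal rank `Rk(G) = γ`
(with respect to some tuple-length). -/
def GRank (H : Type) [Group H] (G : Type) [Group G] (hmod : G ⊨ uTheoryOf H)
    (γ : Ordinal.{0}) : Prop :=
  ∃ n : ℕ, URankEq (uTheoryOf H) n γ
    (@Theory.ModelType.of grpLang (uTheoryOf H) G _ hmod One.instNonempty)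

/-- `G` is `H`-determined: some finite set `X ⊆ G \ {1}` is such that every homomorphism
from `G` to an `H`-limit group killing no element of `X` is injective. -/
def HDetermined (H : Type) [Group H] (G : Type) [Group G] : Prop :=
  ∃ X : Finset G, (1 : G) ∉ X ∧
    ∀ (L' : Type) [Group L'], Group.FG L' → (L' ⊨ uTheoryOf H) →
      ∀ f : G →* L', (∀ x ∈ X, f x ≠ 1) → Function.Injective f


/-! ### Auxiliary lemmas -/

section Aux

variable {L : FirstOrder.Language.{0, 0}}

theorem isQF_subst {α β : Type} {k : ℕ} {φ : L.BoundedFormula α k} (h : φ.IsQF)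
    (f : α → L.Term β) : (φ.subst f).IsQF := by
  induction h with
  | falsum => exact BoundedFormula.IsQF.falsum
  | of_isAtomic h =>
    cases h with
    | equal t₁ t₂ => exact (BoundedFormula.IsAtomic.equal _ _).isQF
    | rel R ts => exact (BoundedFormula.IsAtomic.rel _ _).isQF
  | imp _ _ ih1 ih2 => exact ih1.imp ih2

theorem subst_alls {α β : Type} : ∀ {k : ℕ} (φ : L.BoundedFormula α k) (f : α → L.Term β),
    (φ.alls).subst f = (φ.subst f).alls
  | 0, φ, f => rfl
  | k + 1, φ, f => by
    show (φ.all.alls).subst f = _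
    rw [subst_alls φ.all f]
    rfl

theorem subst_exs {α β : Type} : ∀ {k : ℕ} (φ : L.BoundedFormula α k) (f : α → L.Term β),
    (φ.exs).subst f = (φ.subst f).exs
  | 0, φ, f => rfl
  | k + 1, φ, f => by
    show (φ.ex.exs).subst f = _
    rw [subst_exs φ.ex f]
    rfl

theorem isUniversal_subst {α β : Type} {φ : L.Formula α} (h : IsUniversalFormula L φ)
    (f : α → L.Term β) : IsUniversalFormula L (φ.subst f) := by
  obtain ⟨k, ψ, hψ, rfl⟩ := h
  exact ⟨k, ψ.subst f, isQF_subst hψ f, subst_alls ψ f⟩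

theorem isUniversal_of_isQF {α : Type} {φ : L.Formula α} (h : φ.IsQF) :
    IsUniversalFormula L φ := ⟨0, φ, h, rfl⟩

theorem realize_subst' {α β : Type} {M : Type*} [L.Structure M] (φ : L.Formula α)
    (f : α → L.Term β) (v : β → M) :
    Formula.Realize (φ.subst f) v ↔ Formula.Realize φ (fun a => (f a).realize v) :=
  BoundedFormula.realize_subst

theorem realize_imp' {α : Type} {M : Type*} [L.Structure M] {φ ψ : L.Formula α} {v : α → M} :
    Formula.Realize (φ.imp ψ) v ↔ (Formula.Realize φ v → Formula.Realize ψ v) :=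
  BoundedFormula.realize_imp

/-- Lift a formula to a bounded formula with `k` extra bound variables. -/
def liftK {α : Type} (k : ℕ) (φ : L.Formula α) : L.BoundedFormula α k :=
  BoundedFormula.relabel (Sum.inl : α → α ⊕ Fin k) φ

theorem liftK_isQF {α : Type} {k : ℕ} {φ : L.Formula α} (h : φ.IsQF) : (liftK k φ).IsQF :=
  BoundedFormula.IsQF.relabel h _

theorem fin0_eq {M : Type*} (v w : Fin 0 → M) : v = w := funext fun x => x.elim0

theorem realize_liftK {α : Type} {k : ℕ} {M : Type*} [L.Structure M] {φ : L.Formula α}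
    {v : α → M} {xs : Fin k → M} : (liftK k φ).Realize v xs ↔ φ.Realize v := by
  rw [liftK, BoundedFormula.realize_relabel]
  have h1 : (Sum.elim v (xs ∘ Fin.castAdd 0) ∘ Sum.inl) = v := funext fun a => rfl
  rw [h1]
  exact iff_of_eq (congrArg _ (fin0_eq _ _))

/-- Finite conjunction of a list of formulas. -/
def conjL {α : Type} : List (L.Formula α) → L.Formula α
  | [] => ⊤
  | φ :: l => φ ⊓ conjL l

theorem conjL_isQF {α : Type} : ∀ {l : List (L.Formula α)},
    (∀ φ ∈ l, BoundedFormula.IsQF φ) → (conjL l).IsQF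
  | [], _ => BoundedFormula.IsQF.top
  | φ :: l, h => ((h φ (by simp)).inf (conjL_isQF fun ψ hψ => h ψ (by simp [hψ])))

theorem realize_conjL {α : Type} {M : Type*} [L.Structure M] {v : α → M} :
    ∀ {l : List (L.Formula α)}, (conjL l).Realize v ↔ ∀ φ ∈ l, Formula.Realize φ v
  | [] => by simp [conjL, Formula.Realize]
  | φ :: l => by
    simp only [conjL, List.mem_cons]
    rw [show ((φ ⊓ conjL l).Realize v) ↔ (Formula.Realize φ v ∧ (conjL l).Realize v) from
      BoundedFormula.realize_inf, realize_conjL]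
    constructor
    · rintro ⟨h1, h2⟩ ψ (rfl | hψ)
      · exact h1
      · exact h2 _ hψ
    · intro h
      exact ⟨h φ (Or.inl rfl), fun ψ hψ => h ψ (Or.inr hψ)⟩

end Aux


/-! ### Rank lemmas -/

section Rank

variable {L : FirstOrder.Language.{0, 0}} {T : L.Theory} {n : ℕ}

theorem urankEq_iff (α : Ordinal) (M : Theory.ModelType.{0,0,0} T) :
    URankEq T n α M ↔
      (1 ≤ α ∧ (∃ a : Fin n → M, Generates L a) ∧
        ∀ a : Fin n → M, Generates L a → ESupported (UKclass T n α) (utype a)) := by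
  unfold URankEq
  rw [WellFounded.fix_eq]
  exact Iff.rfl

theorem not_realizes_pType_iff {M : Theory.ModelType.{0,0,0} T} (a : Fin n → M) :
    ¬ RealizesNType (L := L) a (pType L n) ↔ Generates L a := by
  unfold RealizesNType pType
  constructor
  · intro h y
    by_contra hy
    push_neg at hy
    apply h
    refine ⟨fun _ => y, ?_⟩
    rintro φ ⟨t, rfl⟩
    rw [Formula.realize_not, Formula.realize_equal]
    intro hc
    rw [Term.realize_relabel] at hc
    exact hy t (by simpa using hc)
  · rintro h ⟨v, hv⟩
    obtain ⟨t, ht⟩ := h (v 0)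
    have := hv _ ⟨t, rfl⟩
    rw [Formula.realize_not, Formula.realize_equal] at this
    apply this
    rw [Term.realize_relabel]
    simpa using ht

theorem realizes_utype_iff {M N : Theory.ModelType.{0,0,0} T} (b : Fin n → N) (c : Fin n → M) :
    RealizesNType (L := L) c (utype b) ↔
      ∀ ψ : L.Formula (Fin n), IsUniversalFormula L ψ → ψ.Realize b → ψ.Realize c := by
  unfold RealizesNType utype
  constructor
  · rintro ⟨v, hv⟩ ψ hu hb
    have := hv _ ⟨ψ, hu, hb, rfl⟩
    rw [Formula.realize_relabel] at this
    exact this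
  · intro h
    refine ⟨Fin.elim0, ?_⟩
    rintro φ ⟨ψ, hu, hb, rfl⟩
    rw [Formula.realize_relabel]
    exact h ψ hu hb

theorem mem_UKclass_iff {α : Ordinal} {P : Σ M : Theory.ModelType.{0,0,0} T, Fin n → M} :
    P ∈ UKclass T n α ↔
      (¬ RealizesNType (L := L) P.2 (pType L n) ∧
        ∀ β : Ordinal, β < α → ∀ N : Theory.ModelType.{0,0,0} T, URankEq T n β N →
          ∀ b : Fin n → N, Generates L b → ¬ RealizesNType (L := L) P.2 (utype b)) :=
  Iff.rfl

theorem UKclass_anti {α β : Ordinal} (h : α ≤ β) : UKclass T n β ⊆ UKclass (L := L) T n α := by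
  rintro P ⟨h1, h2⟩
  exact ⟨h1, fun δ hδ => h2 δ (lt_of_lt_of_le hδ h)⟩

theorem utype_trans {M N Q : Theory.ModelType.{0,0,0} T} {a : Fin n → M} {b : Fin n → N}
    {c : Fin n → Q} (hab : RealizesNType (L := L) a (utype b))
    (hca : RealizesNType (L := L) c (utype a)) : RealizesNType (L := L) c (utype b) := by
  rw [realizes_utype_iff] at *
  exact fun ψ hu hb => hca ψ hu (hab ψ hu hb)

/-- A quantifier-free fact true of a tuple realizing `utype b` is true of `b`. -/
theorem qf_transfer {M N : Theory.ModelType.{0,0,0} T} {b : Fin n → N} {c : Fin n → M}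
    (hre : RealizesNType (L := L) c (utype b)) {θ : L.Formula (Fin n)} (hqf : θ.IsQF)
    (hc : θ.Realize c) : θ.Realize b := by
  by_contra hb
  rw [realizes_utype_iff] at hre
  have := hre θ.not (isUniversal_of_isQF hqf.not) (by rwa [Formula.realize_not])
  rw [Formula.realize_not] at this
  exact this hc

theorem urank_le_one {α : Ordinal} {M : Theory.ModelType.{0,0,0} T}
    (h : URankEq T n α M) : 1 ≤ α := ((urankEq_iff (L := L) α M).1 h).1

theorem urank_exists_gen {α : Ordinal} {M : Theory.ModelType.{0,0,0} T}
    (h : URankEq T n α M) : ∃ a : Fin n → M, Generates L a :=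
  ((urankEq_iff (L := L) α M).1 h).2.1

/-- Uniqueness of rank. -/
theorem urank_unique {α β : Ordinal} {M : Theory.ModelType.{0,0,0} T}
    (hα : URankEq T n α M) (hβ : URankEq T n β M) : α = β := by
  rcases lt_trichotomy α β with h | h | h
  · exfalso
    obtain ⟨-, ⟨a, ha⟩, hsup⟩ := (urankEq_iff (L := L) β M).1 hβ
    obtain ⟨φ, -, ⟨P, hPK, v, hφ⟩, hforce⟩ := hsup a ha
    have hre : RealizesNType (L := L) P.2 (utype a) := ⟨v, hforce P hPK v hφ⟩
    exact hPK.2 α h M hα a ha hre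
  · exact h
  · exfalso
    obtain ⟨-, ⟨a, ha⟩, hsup⟩ := (urankEq_iff (L := L) α M).1 hα
    obtain ⟨φ, -, ⟨P, hPK, v, hφ⟩, hforce⟩ := hsup a ha
    have hre : RealizesNType (L := L) P.2 (utype a) := ⟨v, hforce P hPK v hφ⟩
    exact hPK.2 β h M hβ a ha hre

/-- A model of rank `δ` together with a generating tuple lies in every `UKclass` up to `δ`. -/
theorem mem_UKclass_of_rank {δ α : Ordinal} {M : Theory.ModelType.{0,0,0} T}
    (hδ : URankEq T n δ M) (hle : α ≤ δ) (a : Fin n → M) (ha : Generates L a) :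
    (⟨M, a⟩ : Σ N : Theory.ModelType.{0,0,0} T, Fin n → N) ∈ UKclass T n α := by
  constructor
  · exact (not_realizes_pType_iff a).2 ha
  · intro β hβ N hN b hb hre
    obtain ⟨-, -, hsup⟩ := (urankEq_iff (L := L) δ M).1 hδ
    obtain ⟨φ, -, ⟨P, hPK, v, hφ⟩, hforce⟩ := hsup a ha
    have hPa : RealizesNType (L := L) P.2 (utype a) := ⟨v, hforce P hPK v hφ⟩
    have hPb : RealizesNType (L := L) P.2 (utype b) := utype_trans hre hPa
    exact hPK.2 β (lt_of_lt_of_le hβ hle) N hN b hb hPb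

end Rank


/-! ### The key lemma: support at a single generating tuple gives rank -/

section Key

variable {L : FirstOrder.Language.{0, 0}} {T : L.Theory} {n : ℕ}

theorem gen_subst {M : Theory.ModelType.{0,0,0} T} {c c' : Fin n → M}
    (hc : Generates L c) (s : Fin n → L.Term (Fin n)) (h : ∀ j, (s j).realize c' = c j) :
    Generates L c' := by
  intro y
  obtain ⟨t, ht⟩ := hc y
  refine ⟨t.subst s, ?_⟩
  rw [Term.realize_subst, show (fun j => (s j).realize c') = c from funext h]
  exact ht

theorem realizes_utype_subst {M N : Theory.ModelType.{0,0,0} T} {b : Fin n → N} {c : Fin n → M}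
    (hre : RealizesNType (L := L) c (utype b)) (r : Fin n → L.Term (Fin n)) :
    RealizesNType (L := L) (fun i => (r i).realize c) (utype (fun i => (r i).realize b)) := by
  rw [realizes_utype_iff] at *
  intro ψ hu hb
  have := hre (ψ.subst r) (isUniversal_subst hu r) (by rw [realize_subst']; exact hb)
  rw [realize_subst'] at this
  exact this

theorem isAtomic_equal {α : Type} (t₁ t₂ : L.Term α) :
    BoundedFormula.IsAtomic (Term.equal t₁ t₂) := BoundedFormula.IsAtomic.equal _ _

theorem rank_of_supported {γ δ : Ordinal} {M : Theory.ModelType.{0,0,0} T}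
    (hδ : URankEq T n δ M) (h1 : 1 ≤ γ)
    {a : Fin n → M} (ha : Generates L a)
    (hsup : ESupported (UKclass T n γ) (utype a)) : URankEq T n γ M := by
  classical
  rw [urankEq_iff]
  refine ⟨h1, ⟨a, ha⟩, ?_⟩
  intro a'' ha''
  obtain ⟨φ₀, hex₀, ⟨P₀, hP₀K, v₀, hφ₀⟩, hforce₀⟩ := hsup
  obtain ⟨k₀, ψ₀, hqf₀, rfl⟩ := hex₀
  choose r hr using fun i => ha (a'' i)
  choose s hs using fun j => ha'' (a j)
  set f : (Fin n ⊕ Fin 0) → L.Term (Fin n ⊕ Fin 0) :=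
    Sum.elim (fun j => ((s j).relabel Sum.inl)) (fun x => x.elim0) with hfdef
  set eqs : L.Formula (Fin n ⊕ Fin 0) :=
    conjL (List.ofFn fun i : Fin n =>
      Term.equal (Term.var (Sum.inl i)) (((r i).subst s).relabel Sum.inl)) with heqsdef
  have heqsqf : eqs.IsQF := by
    apply conjL_isQF
    intro φ hφ
    rw [List.mem_ofFn] at hφ
    obtain ⟨i, rfl⟩ := hφ
    exact (isAtomic_equal _ _).isQF
  have hfreal : ∀ (Q : Theory.ModelType.{0,0,0} T) (c : Fin n → Q) (v v' : Fin 0 → Q)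
      (xs : Fin k₀ → Q),
      (ψ₀.subst f).Realize (Sum.elim c v) xs ↔
        ψ₀.Realize (Sum.elim (fun j => (s j).realize c) v') xs := by
    intro Q c v v' xs
    refine BoundedFormula.realize_subst.trans ?_
    apply iff_of_eq; congr 1
    funext u
    rcases u with j | x
    · show ((s j).relabel Sum.inl).realize (Sum.elim c v) = (s j).realize c
      rw [Term.realize_relabel]
      congr 1
    · exact x.elim0
  have heqsreal : ∀ (Q : Theory.ModelType.{0,0,0} T) (c : Fin n → Q) (v : Fin 0 → Q),
      (Formula.Realize eqs (Sum.elim c v)) ↔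
        ∀ i, c i = (r i).realize (fun j => (s j).realize c) := by
    intro Q c v
    rw [heqsdef, realize_conjL]
    constructor
    · intro h i
      have hh := h _ (List.mem_ofFn.2 ⟨i, rfl⟩)
      rw [Formula.realize_equal] at hh
      simpa [Term.realize_relabel, Term.realize_subst, Sum.elim_comp_inl] using hh
    · intro h φ hφ
      rw [List.mem_ofFn] at hφ
      obtain ⟨i, rfl⟩ := hφ
      rw [Formula.realize_equal]
      simpa [Term.realize_relabel, Term.realize_subst, Sum.elim_comp_inl] using h i
  refine ⟨(ψ₀.subst f ⊓ liftK k₀ eqs).exs,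
    ⟨k₀, _, (isQF_subst hqf₀ f).inf (liftK_isQF heqsqf), rfl⟩, ?_, ?_⟩
  · -- existence
    set d : Fin n → P₀.1 := P₀.2 with hddef
    have hd : Generates L d := (not_realizes_pType_iff d).1 hP₀K.1
    have hU : RealizesNType (L := L) d (utype a) := ⟨v₀, hforce₀ P₀ hP₀K v₀ hφ₀⟩
    have hUiff := (realizes_utype_iff (T := T) a d).1 hU
    set d'' : Fin n → P₀.1 := fun i => (r i).realize d with hd''def
    have hsd : ∀ j, (s j).realize d'' = d j := by
      intro j
      have hform : Formula.Realize (Term.equal (Term.var j) ((s j).subst r)) a := by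
        rw [Formula.realize_equal]
        simp only [Term.realize_var, Term.realize_subst]
        rw [show (fun i => (r i).realize a) = a'' from funext hr]
        exact (hs j).symm
      have := hUiff _ (isUniversal_of_isQF (isAtomic_equal _ _).isQF) hform
      rw [Formula.realize_equal] at this
      simp only [Term.realize_var, Term.realize_subst] at this
      exact this.symm
    have hmem : (⟨P₀.1, d''⟩ : Σ N : Theory.ModelType.{0,0,0} T, Fin n → N) ∈ UKclass T n γ := by
      constructor
      · exact (not_realizes_pType_iff d'').2 (gen_subst hd s hsd)
      · intro β hβ N hN b hb hre
        have hbr : ∀ i, (r i).realize (fun j => (s j).realize b) = b i := by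
          intro i
          have hform : Formula.Realize (Term.equal (Term.var i) ((r i).subst s)) d'' := by
            rw [Formula.realize_equal]
            simp only [Term.realize_var, Term.realize_subst]
            rw [show (fun j => (s j).realize d'') = d from funext hsd]
          have := qf_transfer hre (isAtomic_equal _ _).isQF hform
          rw [Formula.realize_equal] at this
          simp only [Term.realize_var, Term.realize_subst] at this
          exact this.symm
        refine hP₀K.2 β hβ N hN (fun j => (s j).realize b) (gen_subst hb r hbr) ?_
        have := realizes_utype_subst hre s
        rwa [show (fun j => (s j).realize d'') = d from funext hsd] at this
    refine ⟨⟨P₀.1, d''⟩, hmem, v₀, ?_⟩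
    replace hφ₀ := BoundedFormula.realize_exs.1 hφ₀
    refine BoundedFormula.realize_exs.2 ?_
    obtain ⟨xs, hxs⟩ := hφ₀
    refine ⟨xs, ?_⟩
    refine BoundedFormula.realize_inf.2 ?_
    constructor
    · refine (hfreal P₀.1 d'' v₀ v₀ xs).2 ?_
      exact (funext hsd : (fun j => (s j).realize d'') = d) ▸ hxs
    · refine realize_liftK.2 ((heqsreal P₀.1 d'' v₀).2 ?_)
      intro i
      rw [show (fun j => (s j).realize d'') = d from funext hsd]
  · -- forcing
    intro P hPK v hζ
    set c : Fin n → P.1 := P.2 with hcdef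
    replace hζ := BoundedFormula.realize_exs.1 hζ
    obtain ⟨xs, hxs⟩ := hζ
    replace hxs := BoundedFormula.realize_inf.1 hxs
    obtain ⟨hψpart, heqpart⟩ := hxs
    set c' : Fin n → P.1 := fun j => (s j).realize c with hc'def
    have heqs : ∀ i, c i = (r i).realize c' := (heqsreal P.1 c v).1 (realize_liftK.1 heqpart)
    have hrc : (fun i => (r i).realize c') = c := funext fun i => (heqs i).symm
    have hφc' : Formula.Realize (ψ₀.exs) (Sum.elim c' v) := by
      rw [show (Formula.Realize (ψ₀.exs) (Sum.elim c' v)) ↔ _ from BoundedFormula.realize_exs]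
      exact ⟨xs, (hfreal P.1 c v v xs).1 hψpart⟩
    have hgenc : Generates L c := (not_realizes_pType_iff c).1 hPK.1
    have hmem' : (⟨P.1, c'⟩ : Σ N : Theory.ModelType.{0,0,0} T, Fin n → N) ∈ UKclass T n γ := by
      constructor
      · exact (not_realizes_pType_iff c').2 (gen_subst hgenc r (fun i => (heqs i).symm))
      · intro β hβ N hN b hb hre
        have hbs : ∀ j, (s j).realize (fun i => (r i).realize b) = b j := by
          intro j
          have hform : Formula.Realize (Term.equal (Term.var j) ((s j).subst r)) c' := by
            rw [Formula.realize_equal]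
            simp only [Term.realize_var, Term.realize_subst]
            rw [hrc]
          have := qf_transfer hre (isAtomic_equal _ _).isQF hform
          rw [Formula.realize_equal] at this
          simp only [Term.realize_var, Term.realize_subst] at this
          exact this.symm
        refine hPK.2 β hβ N hN (fun i => (r i).realize b) (gen_subst hb s hbs) ?_
        have := realizes_utype_subst hre r
        rwa [hrc] at this
    have hc'a : RealizesNType (L := L) c' (utype a) := ⟨v, hforce₀ ⟨P.1, c'⟩ hmem' v hφc'⟩
    have hc'aiff := (realizes_utype_iff (T := T) a c').1 hc'a
    rintro φ ⟨ψ, hu, hba'', rfl⟩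
    refine Formula.realize_relabel.2 ?_
    have h1' : Formula.Realize (ψ.subst r) a := by
      rw [realize_subst', show (fun i => (r i).realize a) = a'' from funext hr]
      exact hba''
    have h2' := hc'aiff (ψ.subst r) (isUniversal_subst hu r) h1'
    rw [realize_subst', hrc] at h2'
    exact h2'

end Key


/-! ### The descent lemma -/

section Descent

variable {L : FirstOrder.Language.{0, 0}} {T : L.Theory} {n : ℕ}

theorem formula_relabel_isQF {α β : Type} {φ : L.Formula α} (h : φ.IsQF) (g : α → β) :
    (φ.relabel g).IsQF := BoundedFormula.IsQF.relabel h _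

theorem main_descent {θ : L.Formula (Fin n)} (hθ : θ.IsQF) {γ : Ordinal} (h1 : 1 ≤ γ) :
    ∀ δ : Ordinal, ∀ M : Theory.ModelType.{0,0,0} T, ∀ a : Fin n → M,
      URankEq T n δ M → Generates L a → θ.Realize a → γ ≤ δ →
      ∃ (P : Theory.ModelType.{0,0,0} T) (c : Fin n → P),
        URankEq T n γ P ∧ Generates L c ∧ θ.Realize c := by
  intro δ
  induction δ using Ordinal.induction with
  | h δ IH =>
  intro M a hδ ha hθa hγδ
  rcases eq_or_lt_of_le hγδ with rfl | hlt
  · exact ⟨M, a, hδ, ha, hθa⟩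
  have hnot : ¬ ESupported (UKclass T n γ) (utype a) := by
    intro hs
    have hrk := rank_of_supported hδ h1 ha hs
    exact absurd (urank_unique hrk hδ) (ne_of_lt hlt)
  obtain ⟨-, -, hsup⟩ := (urankEq_iff (L := L) δ M).1 hδ
  obtain ⟨φ, ⟨k, ψ, hqf, rfl⟩, ⟨P₂, hP₂, v₂, hφ₂⟩, hforce⟩ := hsup a ha
  have hUa2 : RealizesNType (L := L) P₂.2 (utype a) := ⟨v₂, hforce P₂ hP₂ v₂ hφ₂⟩
  have hθP₂ : Formula.Realize θ P₂.2 :=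
    (realizes_utype_iff a P₂.2).1 hUa2 θ (isUniversal_of_isQF hθ) hθa
  set θ' : L.Formula (Fin n ⊕ Fin 0) := θ.relabel Sum.inl with hθ'def
  have hθ'real : ∀ (Q : Theory.ModelType.{0,0,0} T) (c : Fin n → Q) (v : Fin 0 → Q),
      Formula.Realize θ' (Sum.elim c v) ↔ Formula.Realize θ c := by
    intro Q c v
    rw [hθ'def, Formula.realize_relabel]
    exact iff_of_eq (congrArg _ (funext fun i => rfl))
  have hexist : ∃ P ∈ UKclass (L := L) T n γ, ∃ v : Fin ((utype a).1) → P.1,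
      Formula.Realize ((ψ ⊓ liftK k θ').exs) (Sum.elim P.2 v) := by
    refine ⟨P₂, UKclass_anti (le_of_lt hlt) hP₂, v₂, ?_⟩
    rw [show (Formula.Realize ((ψ ⊓ liftK k θ').exs) (Sum.elim P₂.2 v₂)) ↔ _ from
      BoundedFormula.realize_exs]
    rw [show (Formula.Realize (ψ.exs) (Sum.elim P₂.2 v₂)) ↔ _ from
      BoundedFormula.realize_exs] at hφ₂
    obtain ⟨xs, hxs⟩ := hφ₂
    exact ⟨xs, BoundedFormula.realize_inf.2 ⟨hxs, realize_liftK.2 ((hθ'real _ _ _).2 hθP₂)⟩⟩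
  have hforcefail : ¬ ∀ P ∈ UKclass (L := L) T n γ, ∀ v : Fin ((utype a).1) → P.1,
      Formula.Realize ((ψ ⊓ liftK k θ').exs) (Sum.elim P.2 v) →
        ∀ ψ' ∈ (utype a).2, Formula.Realize ψ' (Sum.elim P.2 v) := by
    intro hf
    exact hnot ⟨(ψ ⊓ liftK k θ').exs,
      ⟨k, _, hqf.inf (liftK_isQF (formula_relabel_isQF hθ Sum.inl)), rfl⟩, hexist, hf⟩
  push_neg at hforcefail
  obtain ⟨P₁, hP₁γ, v₁, hφθ₁, ψ', hψ'mem, hψ'not⟩ := hforcefail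
  rw [show (Formula.Realize ((ψ ⊓ liftK k θ').exs) (Sum.elim P₁.2 v₁)) ↔ _ from
    BoundedFormula.realize_exs] at hφθ₁
  obtain ⟨xs, hxs⟩ := hφθ₁
  rw [BoundedFormula.realize_inf] at hxs
  have hP₁notδ : P₁ ∉ UKclass (L := L) T n δ := by
    intro hP₁δ
    have hφP₁ : Formula.Realize (ψ.exs) (Sum.elim P₁.2 v₁) := by
      rw [show (Formula.Realize (ψ.exs) (Sum.elim P₁.2 v₁)) ↔ _ from
        BoundedFormula.realize_exs]
      exact ⟨xs, hxs.1⟩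
    exact hψ'not (hforce P₁ hP₁δ v₁ hφP₁ ψ' hψ'mem)
  have hθ₁ : Formula.Realize θ P₁.2 :=
    (hθ'real _ _ v₁).1 (realize_liftK.1 hxs.2)
  have hB : ¬ ∀ β : Ordinal, β < δ → ∀ N : Theory.ModelType.{0,0,0} T, URankEq T n β N →
      ∀ b : Fin n → N, Generates L b → ¬ RealizesNType (L := L) P₁.2 (utype b) :=
    fun hBB => hP₁notδ ⟨hP₁γ.1, hBB⟩
  push_neg at hB
  obtain ⟨β, hβδ, N, hN, b, hb, hre⟩ := hB
  have hγβ : γ ≤ β := le_of_not_gt fun hc => hP₁γ.2 β hc N hN b hb hre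
  exact IH β hβδ N b hN hb (qf_transfer hre hθ hθ₁) hγβ

end Descent


/-! ### Group-language auxiliary machinery -/

section GroupAux

/-- Multiplication term. -/
def mulT {α : Type} (t₁ t₂ : grpLang.Term α) : grpLang.Term α :=
  Term.func GroupFunc.mul ![t₁, t₂]

/-- Inverse term. -/
def invT {α : Type} (t : grpLang.Term α) : grpLang.Term α :=
  Term.func GroupFunc.inv ![t]

/-- Identity term. -/
def oneT {α : Type} : grpLang.Term α :=
  Term.func GroupFunc.one ![]

/-- Compatibility of a `grpLang`-structure with a group structure on the same carrier. -/
structure GrpCompat (P : Type*) [grpLang.Structure P] [Group P] : Prop where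
  hmul : ∀ x y : P, Structure.funMap (L := grpLang) GroupFunc.mul ![x, y] = x * y
  hinv : ∀ x : P, Structure.funMap (L := grpLang) GroupFunc.inv ![x] = x⁻¹
  hone : Structure.funMap (L := grpLang) GroupFunc.one ![] = (1 : P)

theorem grpStructure_compat (P : Type*) [Group P] : GrpCompat P := by
  constructor
  · intro x y
    show (![x, y] 0) * (![x, y] 1) = x * y
    simp
  · intro x
    show (![x] 0)⁻¹ = x⁻¹
    simp
  · rfl

theorem realize_mulT {P : Type*} [grpLang.Structure P] [Group P] (hc : GrpCompat P)
    {α : Type} (t₁ t₂ : grpLang.Term α) (v : α → P) :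
    (mulT t₁ t₂).realize v = t₁.realize v * t₂.realize v := by
  show Structure.funMap (L := grpLang) GroupFunc.mul _ = _
  rw [← hc.hmul (t₁.realize v) (t₂.realize v)]
  congr 1
  funext i
  fin_cases i <;> simp [Term.realize]

theorem realize_invT {P : Type*} [grpLang.Structure P] [Group P] (hc : GrpCompat P)
    {α : Type} (t : grpLang.Term α) (v : α → P) :
    (invT t).realize v = (t.realize v)⁻¹ := by
  show Structure.funMap (L := grpLang) GroupFunc.inv _ = _
  rw [← hc.hinv (t.realize v)]
  congr 1
  funext i
  fin_cases i <;> simp [Term.realize]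

theorem realize_oneT {P : Type*} [grpLang.Structure P] [Group P] (hc : GrpCompat P)
    {α : Type} (v : α → P) : (oneT : grpLang.Term α).realize v = 1 := by
  show Structure.funMap (L := grpLang) GroupFunc.one _ = _
  rw [← hc.hone]
  congr 1
  funext i
  exact i.elim0

end GroupAux


/-! ### Group axioms as universal sentences; group structure on models -/

section ModelGroup

theorem realize_mulT' {P : Type*} [grpLang.Structure P] {α : Type} (t₁ t₂ : grpLang.Term α)
    (v : α → P) : (mulT t₁ t₂).realize v =
      Structure.funMap (L := grpLang) GroupFunc.mul ![t₁.realize v, t₂.realize v] := by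
  show Structure.funMap (L := grpLang) GroupFunc.mul _ = _
  congr 1
  funext i
  fin_cases i <;> simp [Term.realize]

theorem realize_invT' {P : Type*} [grpLang.Structure P] {α : Type} (t : grpLang.Term α)
    (v : α → P) : (invT t).realize v =
      Structure.funMap (L := grpLang) GroupFunc.inv ![t.realize v] := by
  show Structure.funMap (L := grpLang) GroupFunc.inv _ = _
  congr 1
  funext i
  fin_cases i <;> simp [Term.realize]

theorem realize_oneT' {P : Type*} [grpLang.Structure P] {α : Type} (v : α → P) :
    (oneT : grpLang.Term α).realize v = Structure.funMap (L := grpLang) GroupFunc.one ![] := by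
  show Structure.funMap (L := grpLang) GroupFunc.one _ = _
  congr 1
  funext i
  exact i.elim0

/-- `∀ x y z, (x * y) * z = x * (y * z)`. -/
def assocSent : grpLang.Sentence :=
  (Term.bdEqual
    (mulT (mulT (Term.var (Sum.inr 0)) (Term.var (Sum.inr 1))) (Term.var (Sum.inr 2)))
    (mulT (Term.var (Sum.inr 0)) (mulT (Term.var (Sum.inr 1)) (Term.var (Sum.inr 2))))
    : grpLang.BoundedFormula Empty 3).alls

/-- `∀ x, 1 * x = x`. -/
def oneMulSent : grpLang.Sentence :=
  (Term.bdEqual (mulT oneT (Term.var (Sum.inr 0))) (Term.var (Sum.inr 0))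
    : grpLang.BoundedFormula Empty 1).alls

/-- `∀ x, x⁻¹ * x = 1`. -/
def invMulSent : grpLang.Sentence :=
  (Term.bdEqual (mulT (invT (Term.var (Sum.inr 0))) (Term.var (Sum.inr 0))) oneT
    : grpLang.BoundedFormula Empty 1).alls

theorem realize_assocSent {P : Type*} [grpLang.Structure P] [Nonempty P] :
    (P ⊨ assocSent) ↔ ∀ x y z : P,
      Structure.funMap (L := grpLang) GroupFunc.mul
          ![Structure.funMap (L := grpLang) GroupFunc.mul ![x, y], z] =
        Structure.funMap (L := grpLang) GroupFunc.mul
          ![x, Structure.funMap (L := grpLang) GroupFunc.mul ![y, z] ] := by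
  rw [Sentence.Realize, assocSent, BoundedFormula.realize_alls]
  constructor
  · intro h x y z
    have := h ![x, y, z]
    rw [BoundedFormula.realize_bdEqual, realize_mulT', realize_mulT', realize_mulT',
      realize_mulT'] at this
    simpa [Term.realize] using this
  · intro h xs
    rw [BoundedFormula.realize_bdEqual, realize_mulT', realize_mulT', realize_mulT',
      realize_mulT']
    simpa [Term.realize] using h (xs 0) (xs 1) (xs 2)

theorem realize_oneMulSent {P : Type*} [grpLang.Structure P] [Nonempty P] :
    (P ⊨ oneMulSent) ↔ ∀ x : P,
      Structure.funMap (L := grpLang) GroupFunc.mul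
          ![Structure.funMap (L := grpLang) GroupFunc.one ![], x] = x := by
  rw [Sentence.Realize, oneMulSent, BoundedFormula.realize_alls]
  constructor
  · intro h x
    have := h ![x]
    rw [BoundedFormula.realize_bdEqual, realize_mulT', realize_oneT'] at this
    simpa [Term.realize] using this
  · intro h xs
    rw [BoundedFormula.realize_bdEqual, realize_mulT', realize_oneT']
    simpa [Term.realize] using h (xs 0)

theorem realize_invMulSent {P : Type*} [grpLang.Structure P] [Nonempty P] :
    (P ⊨ invMulSent) ↔ ∀ x : P,
      Structure.funMap (L := grpLang) GroupFunc.mul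
          ![Structure.funMap (L := grpLang) GroupFunc.inv ![x], x] =
        Structure.funMap (L := grpLang) GroupFunc.one ![] := by
  rw [Sentence.Realize, invMulSent, BoundedFormula.realize_alls]
  constructor
  · intro h x
    have := h ![x]
    rw [BoundedFormula.realize_bdEqual, realize_mulT', realize_invT', realize_oneT'] at this
    simpa [Term.realize] using this
  · intro h xs
    rw [BoundedFormula.realize_bdEqual, realize_mulT', realize_invT', realize_oneT']
    simpa [Term.realize] using h (xs 0)

variable {H : Type} [Group H]

theorem assocSent_mem : assocSent ∈ uTheoryOf H := by
  refine ⟨⟨3, _, (BoundedFormula.IsAtomic.equal _ _).isQF, rfl⟩, ?_⟩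
  rw [realize_assocSent]
  intro x y z
  simp only [(grpStructure_compat H).hmul]
  exact mul_assoc x y z

theorem oneMulSent_mem : oneMulSent ∈ uTheoryOf H := by
  refine ⟨⟨1, _, (BoundedFormula.IsAtomic.equal _ _).isQF, rfl⟩, ?_⟩
  rw [realize_oneMulSent]
  intro x
  simp only [(grpStructure_compat H).hmul, (grpStructure_compat H).hone]
  exact one_mul x

theorem invMulSent_mem : invMulSent ∈ uTheoryOf H := by
  refine ⟨⟨1, _, (BoundedFormula.IsAtomic.equal _ _).isQF, rfl⟩, ?_⟩
  rw [realize_invMulSent]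
  intro x
  simp only [(grpStructure_compat H).hmul, (grpStructure_compat H).hone,
    (grpStructure_compat H).hinv]
  exact inv_mul_cancel x

/-- Any model of `Th_∀(H)` carries a group structure given by the interpretations. -/
def modelGroup (M : Theory.ModelType.{0,0,0} (uTheoryOf H)) : Group M.Carrier :=
  letI : Mul M.Carrier := ⟨fun x y => Structure.funMap (L := grpLang) GroupFunc.mul ![x, y]⟩
  letI : One M.Carrier := ⟨Structure.funMap (L := grpLang) GroupFunc.one ![]⟩
  letI : Inv M.Carrier := ⟨fun x => Structure.funMap (L := grpLang) GroupFunc.inv ![x]⟩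
  Group.ofLeftAxioms
    (realize_assocSent.1 (Theory.realize_sentence_of_mem (uTheoryOf H) (assocSent_mem (H := H))))
    (realize_oneMulSent.1 (Theory.realize_sentence_of_mem (uTheoryOf H) (oneMulSent_mem (H := H))))
    (realize_invMulSent.1 (Theory.realize_sentence_of_mem (uTheoryOf H) (invMulSent_mem (H := H))))

theorem modelGroup_compat (M : Theory.ModelType.{0,0,0} (uTheoryOf H)) :
    letI := modelGroup M
    GrpCompat M.Carrier := by
  letI := modelGroup M
  exact ⟨fun x y => rfl, fun x => rfl, rfl⟩

end ModelGroup


/-! ### Words and terms -/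

section WordsTerms

theorem term_eta2 (α : Type) (ts : Fin 2 → grpLang.Term α) :
    Term.func GroupFunc.mul ts = mulT (ts 0) (ts 1) := by
  unfold mulT
  congr 1
  funext i
  fin_cases i <;> rfl

theorem term_eta1 (α : Type) (ts : Fin 1 → grpLang.Term α) :
    Term.func GroupFunc.inv ts = invT (ts 0) := by
  unfold invT
  congr 1
  funext i
  fin_cases i <;> rfl

theorem term_eta0 (α : Type) (ts : Fin 0 → grpLang.Term α) :
    Term.func GroupFunc.one ts = oneT := by
  unfold oneT
  congr 1
  funext i
  exact i.elim0

/-- The free-group word associated to a group-language term. -/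
def wordOfTerm {m : ℕ} : grpLang.Term (Fin m) → FreeGroup (Fin m)
  | .var i => FreeGroup.of i
  | .func GroupFunc.mul ts => wordOfTerm (ts 0) * wordOfTerm (ts 1)
  | .func GroupFunc.inv ts => (wordOfTerm (ts 0))⁻¹
  | .func GroupFunc.one _ => 1

theorem lift_wordOfTerm {P : Type*} [grpLang.Structure P] [Group P] (hc : GrpCompat P)
    {m : ℕ} (c : Fin m → P) (t : grpLang.Term (Fin m)) :
    FreeGroup.lift c (wordOfTerm t) = t.realize c := by
  induction t with
  | var i => simp [wordOfTerm, Term.realize, FreeGroup.lift_apply_of]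
  | func f ts ih =>
    cases f with
    | mul =>
      rw [show wordOfTerm (Term.func GroupFunc.mul ts) = wordOfTerm (ts 0) * wordOfTerm (ts 1)
        from rfl, term_eta2 _ ts, realize_mulT hc, map_mul, ih 0, ih 1]
    | inv =>
      rw [show wordOfTerm (Term.func GroupFunc.inv ts) = (wordOfTerm (ts 0))⁻¹ from rfl,
        term_eta1 _ ts, realize_invT hc, map_inv, ih 0]
    | one =>
      rw [show wordOfTerm (Term.func GroupFunc.one ts) = 1 from rfl,
        term_eta0 _ ts, realize_oneT hc, map_one]

theorem exists_termOfWord {m : ℕ} (w : FreeGroup (Fin m)) :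
    ∃ t : grpLang.Term (Fin m), ∀ (P : Type) (_ : grpLang.Structure P) (_ : Group P),
      GrpCompat P → ∀ c : Fin m → P, t.realize c = FreeGroup.lift c w := by
  induction w using FreeGroup.induction_on with
  | C1 =>
    refine ⟨oneT, fun P _ _ hc c => ?_⟩
    rw [realize_oneT hc, map_one]
  | of x =>
    refine ⟨Term.var x, fun P _ _ hc c => ?_⟩
    show c x = FreeGroup.lift c (FreeGroup.of x)
    rw [FreeGroup.lift_apply_of]
  | inv_of x ih =>
    obtain ⟨t, ht⟩ := ih
    refine ⟨invT t, fun P iS iG hc c => ?_⟩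
    rw [realize_invT hc, map_inv, ht P iS iG hc c]
  | mul x y ihx ihy =>
    obtain ⟨tx, htx⟩ := ihx
    obtain ⟨ty, hty⟩ := ihy
    refine ⟨mulT tx ty, fun P iS iG hc c => ?_⟩
    rw [realize_mulT hc, map_mul, htx P iS iG hc c, hty P iS iG hc c]

/-- A term representing a free-group word. -/
noncomputable def termOfWord {m : ℕ} (w : FreeGroup (Fin m)) : grpLang.Term (Fin m) :=
  (exists_termOfWord w).choose

theorem realize_termOfWord {m : ℕ} (w : FreeGroup (Fin m)) {P : Type} [iS : grpLang.Structure P]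
    [iG : Group P] (hc : GrpCompat P) (c : Fin m → P) :
    (termOfWord w).realize c = FreeGroup.lift c w :=
  (exists_termOfWord w).choose_spec P iS iG hc c

theorem realize_mem_closure {P : Type*} [grpLang.Structure P] [Group P] (hc : GrpCompat P)
    {m : ℕ} (c : Fin m → P) (t : grpLang.Term (Fin m)) :
    t.realize c ∈ Subgroup.closure (Set.range c) := by
  induction t with
  | var i => exact Subgroup.subset_closure ⟨i, rfl⟩
  | func f ts ih =>
    cases f with
    | mul =>
      rw [term_eta2 _ ts, realize_mulT hc]
      exact mul_mem (ih 0) (ih 1)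
    | inv =>
      rw [term_eta1 _ ts, realize_invT hc]
      exact inv_mem (ih 0)
    | one =>
      rw [term_eta0 _ ts, realize_oneT hc]
      exact one_mem _

end WordsTerms


/-! ### Identifying model structures with group structures -/

section StructEq

theorem grpStructure_eq {M : Type} [Group M] (S : grpLang.Structure M)
    (hc : @GrpCompat M S _) : S = grpStructure M := by
  have h2 : ∀ v : Fin 2 → M, S.funMap GroupFunc.mul v = v 0 * v 1 := by
    intro v
    calc S.funMap GroupFunc.mul v = S.funMap GroupFunc.mul ![v 0, v 1] := by
          congr 1; funext i; fin_cases i <;> simp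
      _ = v 0 * v 1 := hc.hmul _ _
  have h1 : ∀ v : Fin 1 → M, S.funMap GroupFunc.inv v = (v 0)⁻¹ := by
    intro v
    calc S.funMap GroupFunc.inv v = S.funMap GroupFunc.inv ![v 0] := by
          congr 1; funext i; fin_cases i <;> simp
      _ = (v 0)⁻¹ := hc.hinv _
  have h0 : ∀ v : Fin 0 → M, S.funMap GroupFunc.one v = 1 := by
    intro v
    calc S.funMap GroupFunc.one v = S.funMap GroupFunc.one ![] := by
          congr 1; funext i; exact i.elim0
      _ = 1 := hc.hone
  rcases S with ⟨fm, rm⟩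
  unfold grpStructure
  congr 1
  · funext k f v
    cases f with
    | mul => exact h2 v
    | inv => exact h1 v
    | one => exact h0 v
  · funext k r v
    exact r.elim

theorem modelType_eq_aux {T' : grpLang.Theory} (C : Type) (S S' : grpLang.Structure C)
    (hS : S' = S) (im : @Theory.Model grpLang C S' T') (im2 : @Theory.Model grpLang C S T')
    (ne : Nonempty C) (ne' : Nonempty C) :
    (@Theory.ModelType.mk grpLang T' C S' im ne) = @Theory.ModelType.mk grpLang T' C S im2 ne' := by
  subst hS
  rfl

variable {H : Type} [Group H]

theorem modelTypeOf_eq (P : Theory.ModelType.{0,0,0} (uTheoryOf H)) :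
    letI := modelGroup P
    ∀ (hmod : @Theory.Model grpLang P.Carrier (grpStructure P.Carrier) (uTheoryOf H))
      (ne : Nonempty P.Carrier),
      (@Theory.ModelType.of grpLang (uTheoryOf H) P.Carrier (grpStructure P.Carrier) hmod ne)
        = P := by
  letI := modelGroup P
  intro hmod ne
  have h : grpStructure P.Carrier = P.struc :=
    (grpStructure_eq P.struc (modelGroup_compat P)).symm
  exact modelType_eq_aux P.Carrier P.struc (grpStructure P.Carrier) h hmod P.is_model ne
    P.nonempty'

end StructEq

end Paper

/-- For an equationally noetherian group `H`, a finitely generated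
`H`-limit group `G`, a finite `X ⊆ G \ {1}` and an ordinal `γ` with `1 ≤ γ ≤ Rk(G)`,
there is an epimorphism `f : G → L` onto an `H`-limit group `L` with `Rk(L) = γ` and
`1 ∉ f(X)`. -/
theorem stmt_19 (H : Type) [Group H] (hH : Paper.EquationallyNoetherian H)
    (G : Type) [Group G] (hfg : Group.FG G) (hmod : G ⊨ Paper.uTheoryOf H)
    (X : Finset G) (hX : (1 : G) ∉ X)
    (γ : Ordinal) (h1 : 1 ≤ γ) (hγ : ∃ δ : Ordinal, Paper.GRank H G hmod δ ∧ γ ≤ δ) :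
    ∃ (Q : Paper.LimitGroup H) (f : G →* ((Q.1 : Type))),
      Function.Surjective f ∧ Paper.GRank H (Q.1 : Type) Q.2.2 γ ∧
      ∀ x ∈ X, f x ≠ 1 := by
  classical
  obtain ⟨δ, ⟨n, hδ⟩, hγδ⟩ := hγ
  set T : Paper.grpLang.Theory := Paper.uTheoryOf H with hT
  set MG : T.ModelType :=
    @Theory.ModelType.of Paper.grpLang T G (Paper.grpStructure G) hmod One.instNonempty with hMG
  have hδ' : Paper.URankEq T n δ MG := hδ
  obtain ⟨a₀, ha₀⟩ := Paper.urank_exists_gen (L := Paper.grpLang) hδ'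
  have hcG : Paper.GrpCompat G := Paper.grpStructure_compat G
  let aG : Fin n → G := a₀
  -- relations of the tuple a₀ and the equationally-noetherian reduction
  set R : Set (FreeGroup (Fin n)) := {w | FreeGroup.lift aG w = 1} with hR
  obtain ⟨S₀, hS₀S, hS₀fin, hV⟩ := hH n (Monoid.Coprod.inr '' R)
  set R₀ : Set (FreeGroup (Fin n)) := Monoid.Coprod.inr ⁻¹' S₀ with hR₀def
  have hR₀R : R₀ ⊆ R := by
    intro w hw
    obtain ⟨w', hw', he⟩ := hS₀S hw
    rwa [← Monoid.Coprod.inr_injective he]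
  have hR₀fin : R₀.Finite :=
    Set.Finite.preimage (Set.injOn_of_injective Monoid.Coprod.inr_injective) hS₀fin
  set R₀l : List (FreeGroup (Fin n)) := hR₀fin.toFinset.toList with hR₀l
  have hR₀lmem : ∀ w, w ∈ R₀l ↔ w ∈ R₀ := by
    intro w
    rw [hR₀l, Finset.mem_toList, Set.Finite.mem_toFinset]
  -- the bridge: R₀-relations imply all R-relations in every model
  have hbridge : ∀ (P : Theory.ModelType.{0,0,0} T), ∀ c : Fin n → P.Carrier,
      (letI := Paper.modelGroup P; ∀ w ∈ R₀, FreeGroup.lift c w = 1) →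
      (letI := Paper.modelGroup P; ∀ w ∈ R, FreeGroup.lift c w = 1) := by
    intro P c hc0 w hw
    letI gP' : Group P.Carrier := Paper.modelGroup P
    have hcP' : Paper.GrpCompat P.Carrier := Paper.modelGroup_compat P
    set imp : Paper.grpLang.Formula (Fin n) :=
      (Paper.conjL (R₀l.map fun u => Term.equal (Paper.termOfWord u) Paper.oneT)).imp
        (Term.equal (Paper.termOfWord w) Paper.oneT) with himp
    set σ : Paper.grpLang.Sentence :=
      (BoundedFormula.relabel (Sum.inr : Fin n → Empty ⊕ Fin n) imp).alls with hσ
    have hform : ∀ (Q : Type) [iS : Paper.grpLang.Structure Q] [iG : Group Q],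
        Paper.GrpCompat Q → ∀ d : Fin n → Q,
        (Formula.Realize imp d ↔
          ((∀ u ∈ R₀, FreeGroup.lift d u = 1) → FreeGroup.lift d w = 1)) := by
      intro Q iS iG hcQ d
      rw [himp]
      rw [Paper.realize_imp']
      rw [Formula.realize_equal, Paper.realize_termOfWord w hcQ, Paper.realize_oneT hcQ]
      constructor
      · intro h hd
        apply h
        rw [Paper.realize_conjL]
        intro φ hφ
        rw [List.mem_map] at hφ
        obtain ⟨u, hu, rfl⟩ := hφ
        rw [Formula.realize_equal, Paper.realize_termOfWord u hcQ, Paper.realize_oneT hcQ]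
        exact hd u ((hR₀lmem u).1 hu)
      · intro h hd
        apply h
        intro u hu
        have := Paper.realize_conjL.1 hd _ (List.mem_map.2 ⟨u, (hR₀lmem u).2 hu, rfl⟩)
        rwa [Formula.realize_equal, Paper.realize_termOfWord u hcQ,
          Paper.realize_oneT hcQ] at this
    have hreal : ∀ (Q : Type) [iS : Paper.grpLang.Structure Q] [iG : Group Q],
        Paper.GrpCompat Q → Nonempty Q → ((Q ⊨ σ) ↔ ∀ d : Fin n → Q,
          (∀ u ∈ R₀, FreeGroup.lift d u = 1) → FreeGroup.lift d w = 1) := by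
      intro Q iS iG hcQ hne
      rw [hσ, Sentence.Realize, BoundedFormula.realize_alls]
      constructor
      · intro h d
        have hh := h d
        rw [Formula.realize_relabel_sumInr] at hh
        exact (hform Q hcQ d).1 hh
      · intro h d
        rw [Formula.realize_relabel_sumInr]
        exact (hform Q hcQ d).2 (h d)
    have hσuniv : Paper.IsUniversalFormula Paper.grpLang σ := by
      refine ⟨n + 0, BoundedFormula.relabel (Sum.inr : Fin n → Empty ⊕ Fin n) imp, ?_, rfl⟩
      apply BoundedFormula.IsQF.relabel
      rw [himp]
      refine BoundedFormula.IsQF.imp (Paper.conjL_isQF ?_) (Paper.isAtomic_equal _ _).isQF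
      intro φ hφ
      rw [List.mem_map] at hφ
      obtain ⟨u, -, rfl⟩ := hφ
      exact (Paper.isAtomic_equal _ _).isQF
    have hσH : H ⊨ σ := by
      rw [hreal H (Paper.grpStructure_compat H) ⟨1⟩]
      intro d hd
      have hdV : d ∈ Paper.Vset S₀ := by
        intro s hs
        obtain ⟨u, hu, rfl⟩ := hS₀S hs
        have hu0 : u ∈ R₀ := hs
        rw [Monoid.Coprod.lift_apply_inr]
        exact hd u hu0
      have hdVS : d ∈ Paper.Vset (Monoid.Coprod.inr '' R) := by rw [hV]; exact hdV
      have hww := hdVS (Monoid.Coprod.inr w) ⟨w, hw, rfl⟩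
      rwa [Monoid.Coprod.lift_apply_inr] at hww
    have hσT : σ ∈ T := ⟨hσuniv, hσH⟩
    have hPσ : P.Carrier ⊨ σ := Theory.realize_sentence_of_mem T hσT
    exact (hreal P.Carrier hcP' P.nonempty').1 hPσ c hc0
  -- terms for the elements of X
  have htx : ∀ x : G, ∃ t : Paper.grpLang.Term (Fin n), t.realize aG = x := ha₀
  choose tx htxs using htx
  -- the quantifier-free formula θ
  set θ : Paper.grpLang.Formula (Fin n) :=
    Paper.conjL (R₀l.map fun u => Term.equal (Paper.termOfWord u) Paper.oneT) ⊓
    Paper.conjL (X.toList.map fun x => (Term.equal (tx x) Paper.oneT).not) with hθdef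
  have hθqf : θ.IsQF := by
    refine BoundedFormula.IsQF.inf (Paper.conjL_isQF ?_) (Paper.conjL_isQF ?_)
    · intro φ hφ
      rw [List.mem_map] at hφ
      obtain ⟨u, -, rfl⟩ := hφ
      exact (Paper.isAtomic_equal _ _).isQF
    · intro φ hφ
      rw [List.mem_map] at hφ
      obtain ⟨x, -, rfl⟩ := hφ
      exact (Paper.isAtomic_equal _ _).isQF.not
  have hθa₀ : Formula.Realize θ aG := by
    rw [hθdef]
    refine BoundedFormula.realize_inf.2 ⟨Paper.realize_conjL.2 ?_, Paper.realize_conjL.2 ?_⟩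
    · intro φ hφ
      rw [List.mem_map] at hφ
      obtain ⟨u, hu, rfl⟩ := hφ
      rw [Formula.realize_equal, Paper.realize_termOfWord u hcG, Paper.realize_oneT hcG]
      exact hR₀R ((hR₀lmem u).1 hu)
    · intro φ hφ
      rw [List.mem_map] at hφ
      obtain ⟨x, hx, rfl⟩ := hφ
      rw [Formula.realize_not, Formula.realize_equal, Paper.realize_oneT hcG, htxs]
      intro hcontra
      rw [Finset.mem_toList] at hx
      rw [hcontra] at hx
      exact hX hx
  -- descend
  obtain ⟨P, cc, hrkγ, hgenc, hθc⟩ :=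
    Paper.main_descent hθqf h1 δ MG a₀ hδ' ha₀ hθa₀ hγδ
  -- group structure on P
  letI gP : Group P.Carrier := Paper.modelGroup P
  have hcP : Paper.GrpCompat P.Carrier := Paper.modelGroup_compat P
  have hSP : Paper.grpStructure P.Carrier = P.struc :=
    (Paper.grpStructure_eq P.struc hcP).symm
  -- θ-consequences in P
  have hc1 : ∀ w ∈ R₀, FreeGroup.lift (cc : Fin n → P.Carrier) w = 1 := by
    intro w hw
    rw [hθdef] at hθc
    have hcj := (BoundedFormula.realize_inf.1 hθc).1
    have := Paper.realize_conjL.1 hcj _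
      (List.mem_map.2 ⟨w, (hR₀lmem w).2 hw, rfl⟩)
    rw [Formula.realize_equal, Paper.realize_termOfWord w hcP, Paper.realize_oneT hcP] at this
    exact this
  have hc2 : ∀ x ∈ X, (tx x).realize (cc : Fin n → P.Carrier) ≠ 1 := by
    intro x hx
    rw [hθdef] at hθc
    have hcj := (BoundedFormula.realize_inf.1 hθc).2
    have := Paper.realize_conjL.1 hcj _
      (List.mem_map.2 ⟨x, Finset.mem_toList.2 hx, rfl⟩)
    rw [Formula.realize_not, Formula.realize_equal, Paper.realize_oneT hcP] at this
    exact this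
  have hcR : ∀ w ∈ R, FreeGroup.lift (cc : Fin n → P.Carrier) w = 1 := hbridge P cc hc1
  -- the surjections
  set π : FreeGroup (Fin n) →* G := FreeGroup.lift aG with hπ
  set ρ : FreeGroup (Fin n) →* P.Carrier := FreeGroup.lift (cc : Fin n → P.Carrier) with hρ
  have hπsurj : Function.Surjective π := by
    intro y
    exact ⟨Paper.wordOfTerm (tx y), by rw [hπ, Paper.lift_wordOfTerm hcG, htxs]⟩
  have hcong : ∀ u v : FreeGroup (Fin n), π u = π v → ρ u = ρ v := by
    intro u v huv
    have h1' : π (u * v⁻¹) = 1 := by rw [map_mul, map_inv, huv, mul_inv_cancel]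
    have hmemR : u * v⁻¹ ∈ R := h1'
    have h2' : ρ (u * v⁻¹) = 1 := hcR _ hmemR
    rw [map_mul, map_inv] at h2'
    exact mul_inv_eq_one.1 h2'
  set f0 : G → P.Carrier := fun g => ρ (Function.surjInv hπsurj g) with hf0
  have hπsi : ∀ g : G, π (Function.surjInv hπsurj g) = g := fun g =>
    Function.surjInv_eq hπsurj g
  have hf0w : ∀ w : FreeGroup (Fin n), f0 (π w) = ρ w := by
    intro w
    exact hcong _ _ (hπsi (π w))
  have hf0mul : ∀ g₁ g₂ : G, f0 (g₁ * g₂) = f0 g₁ * f0 g₂ := by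
    intro g₁ g₂
    have : f0 (g₁ * g₂) = ρ (Function.surjInv hπsurj g₁ * Function.surjInv hπsurj g₂) := by
      apply hcong
      rw [map_mul, hπsi, hπsi, hπsi]
    rw [this, map_mul]
  set f : G →* P.Carrier := MonoidHom.mk' f0 hf0mul with hf
  have hfsurj : Function.Surjective f := by
    intro y
    obtain ⟨t, ht⟩ := hgenc y
    refine ⟨π (Paper.wordOfTerm t), ?_⟩
    show f0 (π (Paper.wordOfTerm t)) = y
    rw [hf0w, hρ, Paper.lift_wordOfTerm hcP]
    exact ht
  have hfX : ∀ x ∈ X, f x ≠ 1 := by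
    intro x hx
    have hfx : f x = (tx x).realize (cc : Fin n → P.Carrier) := by
      show f0 x = _
      have hxw : x = π (Paper.wordOfTerm (tx x)) := by
        rw [hπ, Paper.lift_wordOfTerm hcG, htxs]
      calc f0 x = f0 (π (Paper.wordOfTerm (tx x))) := by rw [← hxw]
        _ = ρ (Paper.wordOfTerm (tx x)) := hf0w _
        _ = (tx x).realize (cc : Fin n → P.Carrier) := by
            rw [hρ, Paper.lift_wordOfTerm hcP]
    rw [hfx]
    exact hc2 x hx
  -- finite generation
  have hfgP : Group.FG P.Carrier := by
    rw [Group.fg_iff]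
    refine ⟨Set.range cc, ?_, Set.finite_range cc⟩
    rw [Subgroup.eq_top_iff']
    intro y
    obtain ⟨t, ht⟩ := hgenc y
    rw [← ht]
    exact Paper.realize_mem_closure hcP cc t
  -- the model property for the group structure
  have hmodP : @Theory.Model Paper.grpLang P.Carrier (Paper.grpStructure P.Carrier) T := by
    rw [hSP]
    exact P.is_model
  refine ⟨⟨GrpCat.of P.Carrier, hfgP, hmodP⟩, f, hfsurj, ?_, hfX⟩
  refine ⟨n, ?_⟩
  have heq := Paper.modelTypeOf_eq (H := H) P hmodP One.instNonempty
  show Paper.URankEq T n γ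
    (@Theory.ModelType.of Paper.grpLang T P.Carrier (Paper.grpStructure P.Carrier) hmodP
      One.instNonempty)
  rw [heq]
  exact hrkγ
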